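/- Assume (H2) holds with the constants ρ > N, C₀ > 0, r₀ > 0 and compact set M. Then there exists C > 0 such that for every ε ∈ (0,1] and every z ∈ M: 0 ≤ ∫_{ℝ^N} u_ε(x)^{2*_α} dx − ∫_{ℝ^N} b(x) η(x−z)^{2*_α} u_ε(x−z)^{2*_α} dx ≤ C ε^N. -/

import Mathlib

open MeasureTheory Real Filter
open Metric
open scoped ENNReal

noncomputable section

abbrev Euc (N : ℕ) := EuclideanSpace ℝ (Fin N)

noncomputable def twoStar (N : ℕ) (α : ℝ) : ℝ := 2 * N / (N - 2 * α)

noncomputable def bubble (N : ℕ) (α ε : ℝ) (x : Euc N) : ℝ :=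
  ε ^ (((N : ℝ) - 2 * α) / 2) / (ε ^ 2 + ‖x‖ ^ 2) ^ (((N : ℝ) - 2 * α) / 2)

lemma integrableOn_rpow_norm_ball' (N : ℕ) (hN : 0 < N) {s : ℝ} (hs : -(N : ℝ) < s)
    {R : ℝ} (hR : 0 < R) :
    IntegrableOn (fun y : Euc N => ‖y‖ ^ s) (ball (0 : Euc N) R) := by
  haveI : NeZero N := ⟨hN.ne'⟩
  constructor
  · exact Measurable.aestronglyMeasurable (by fun_prop)
  · -- finite integral
    have hsN : 0 < s + N := by linarith
    set K : ℝ := max 1 ((2 : ℝ) ^ (-s)) with hK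
    have hK1 : (1 : ℝ) ≤ K := le_max_left _ _
    have hK0 : 0 < K := lt_of_lt_of_le one_pos hK1
    set A : ℕ → Set (Euc N) := fun k => {y | R / 2 ^ (k + 1) < ‖y‖ ∧ ‖y‖ ≤ R / 2 ^ k} with hA
    have hcover : ball (0 : Euc N) R ⊆ {0} ∪ ⋃ k, A k := by
      intro y hy
      rcases eq_or_ne y 0 with h0 | h0
      · exact Or.inl h0
      · right
        have hy0 : 0 < ‖y‖ := norm_pos_iff.mpr h0
        have hyR : ‖y‖ < R := by simpa using mem_ball_iff_norm.mp hy
        have ht1 : 1 ≤ R / ‖y‖ := by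
          rw [le_div_iff₀ hy0]; linarith
        obtain ⟨n, hn1, hn2⟩ := exists_nat_pow_near ht1 (one_lt_two (α := ℝ))
        refine Set.mem_iUnion.mpr ⟨n, ?_, ?_⟩
        · rw [div_lt_iff₀ (by positivity)]
          rw [div_lt_iff₀ hy0] at hn2
          linarith [hn2]
        · rw [le_div_iff₀ (by positivity)]
          rw [le_div_iff₀ hy0] at hn1
          linarith [hn1]
    have hbound : ∀ k : ℕ, ∀ y ∈ A k, ‖y‖ ^ s ≤ K * (R / 2 ^ k) ^ s := by
      intro k y hy
      obtain ⟨h1, h2⟩ := hy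
      have hrk : (0:ℝ) < R / 2 ^ k := by positivity
      rcases le_or_gt 0 s with hs0 | hs0
      · calc ‖y‖ ^ s ≤ (R / 2 ^ k) ^ s := Real.rpow_le_rpow (norm_nonneg _) h2 hs0
          _ ≤ K * (R / 2 ^ k) ^ s := le_mul_of_one_le_left (by positivity) hK1
      · have h1' : (0:ℝ) < R / 2 ^ (k + 1) := by positivity
        have : ‖y‖ ^ s ≤ (R / 2 ^ (k + 1)) ^ s :=
          Real.rpow_le_rpow_of_nonpos h1' h1.le hs0.le
        refine this.trans ?_
        have : (R / 2 ^ (k + 1) : ℝ) = (R / 2 ^ k) * (2 : ℝ)⁻¹ := by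
          rw [pow_succ]; ring
        rw [this, Real.mul_rpow hrk.le (by norm_num), Real.inv_rpow (by norm_num),
          ← Real.rpow_neg (by norm_num)]
        rw [mul_comm]
        gcongr
        exact le_max_right _ _
    set r : ℝ := (2 : ℝ) ^ (-(s + N)) with hr
    have hr0 : 0 ≤ r := Real.rpow_nonneg (by norm_num) _
    have hr1 : r < 1 := Real.rpow_lt_one_of_one_lt_of_neg one_lt_two (by linarith)
    set C1 : ℝ := K * R ^ (s + (N : ℝ)) with hC1
    set V : ℝ≥0∞ := volume (ball (0 : Euc N) 1) with hV
    have hVfin : V ≠ ⊤ := measure_ball_lt_top.ne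
    have hAk_meas : ∀ k, MeasurableSet (A k) := by
      intro k
      have : A k = (fun y : Euc N => ‖y‖) ⁻¹' Set.Ioc (R / 2 ^ (k + 1)) (R / 2 ^ k) := rfl
      rw [this]
      exact measurable_norm measurableSet_Ioc
    have hterm : ∀ k : ℕ, (K * (R / 2 ^ k) ^ s) * ((R / 2 ^ k) ^ (N : ℕ)) = C1 * r ^ k := by
      intro k
      have h2k : (0:ℝ) < 2 ^ k := by positivity
      have hrk : (0:ℝ) < R / 2 ^ k := by positivity
      have e1 : ((R / 2 ^ k : ℝ) ^ (N : ℕ)) = (R / 2 ^ k) ^ ((N : ℕ) : ℝ) :=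
        (Real.rpow_natCast _ _).symm
      rw [e1, mul_assoc, ← Real.rpow_add hrk, hC1, mul_assoc]
      congr 1
      rw [Real.div_rpow hR.le h2k.le, hr]
      rw [← Real.rpow_natCast (2:ℝ) k, ← Real.rpow_mul (by norm_num : (0:ℝ) ≤ 2),
        ← Real.rpow_natCast ((2:ℝ) ^ (-(s + (N:ℝ)))) k,
        ← Real.rpow_mul (by norm_num : (0:ℝ) ≤ 2), div_eq_mul_inv,
        ← Real.rpow_neg (by norm_num : (0:ℝ) ≤ 2)]
      ring_nf
    rw [hasFiniteIntegral_iff_norm]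
    calc ∫⁻ y in ball (0 : Euc N) R, ENNReal.ofReal ‖‖y‖ ^ s‖
        ≤ ∫⁻ y in ({0} ∪ ⋃ k, A k : Set (Euc N)), ENNReal.ofReal ‖‖y‖ ^ s‖ :=
          lintegral_mono_set hcover
      _ ≤ (∫⁻ y in ({0} : Set (Euc N)), ENNReal.ofReal ‖‖y‖ ^ s‖)
            + ∫⁻ y in (⋃ k, A k : Set (Euc N)), ENNReal.ofReal ‖‖y‖ ^ s‖ :=
          lintegral_union_le _ _ _
      _ ≤ 0 + ∑' k, ∫⁻ y in A k, ENNReal.ofReal ‖‖y‖ ^ s‖ := by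
          gcongr
          · exact le_of_eq (setLIntegral_measure_zero _ _ (measure_singleton 0))
          · exact lintegral_iUnion_le _ _
      _ ≤ 0 + ∑' k, ENNReal.ofReal C1 * ENNReal.ofReal r ^ k * V := by
          gcongr with k
          calc ∫⁻ y in A k, ENNReal.ofReal ‖‖y‖ ^ s‖
              ≤ ∫⁻ _ in A k, ENNReal.ofReal (K * (R / 2 ^ k) ^ s) := by
                refine setLIntegral_mono' (hAk_meas k) ?_
                intro y hy
                refine ENNReal.ofReal_le_ofReal ?_
                rw [Real.norm_eq_abs, abs_of_nonneg (Real.rpow_nonneg (norm_nonneg _) _)]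
                exact hbound k y hy
            _ = ENNReal.ofReal (K * (R / 2 ^ k) ^ s) * volume (A k) := setLIntegral_const _ _
            _ ≤ ENNReal.ofReal (K * (R / 2 ^ k) ^ s) *
                  (ENNReal.ofReal ((R / 2 ^ k) ^ (N : ℕ)) * V) := by
                gcongr
                have hsub : A k ⊆ closedBall (0 : Euc N) (R / 2 ^ k) := by
                  intro y hy
                  exact mem_closedBall_zero_iff.mpr hy.2
                refine (measure_mono hsub).trans ?_
                rw [Measure.addHaar_closedBall volume 0 (by positivity : (0:ℝ) ≤ R / 2 ^ k)]
                rw [finrank_euclideanSpace_fin]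
            _ = ENNReal.ofReal C1 * ENNReal.ofReal r ^ k * V := by
                rw [← mul_assoc, ← ENNReal.ofReal_mul (by positivity), hterm k,
                  ENNReal.ofReal_mul (by positivity), ← ENNReal.ofReal_pow hr0]
      _ = ENNReal.ofReal C1 * (1 - ENNReal.ofReal r)⁻¹ * V := by
          rw [zero_add, ENNReal.tsum_mul_right, ENNReal.tsum_mul_left, ENNReal.tsum_geometric]
      _ < ⊤ := by
          refine ENNReal.mul_lt_top (ENNReal.mul_lt_top ENNReal.ofReal_lt_top ?_)
            hVfin.lt_top
          rw [ENNReal.inv_lt_top]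
          rw [tsub_pos_iff_lt]
          exact ENNReal.ofReal_lt_one.mpr hr1


lemma bubble_rpow (N : ℕ) (α ε : ℝ) (hε : 0 < ε) (hNα : 0 < (N : ℝ) - 2 * α) (x : Euc N) :
    bubble N α ε x ^ twoStar N α = ε ^ (N : ℝ) / (ε ^ 2 + ‖x‖ ^ 2) ^ (N : ℝ) := by
  have hA : (0:ℝ) < ε ^ 2 + ‖x‖ ^ 2 := by positivity
  have hpq : ((N : ℝ) - 2 * α) / 2 * twoStar N α = N := by
    unfold twoStar
    field_simp
  rw [bubble, Real.div_rpow (Real.rpow_nonneg hε.le _) (Real.rpow_nonneg hA.le _),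
    ← Real.rpow_mul hε.le, ← Real.rpow_mul hA.le, hpq]

set_option maxHeartbeats 2000000 in
theorem statement_12 (N : ℕ) (α : ℝ) (hα0 : 0 < α) (hα1 : α < 1) (hN : 4 * α < (N : ℝ))
    (b : Euc N → ℝ) (hb_cont : Continuous b) (hb_bdd : ∃ C : ℝ, ∀ x, |b x| ≤ C)
    (r₀ : ℝ) (hr₀ : 0 < r₀)
    (η : Euc N → ℝ) (hη_cont : Continuous η) (hη01 : ∀ x, η x ∈ Set.Icc (0 : ℝ) 1)
    (hη_one : ∀ x : Euc N, ‖x‖ ≤ r₀ / 2 → η x = 1)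
    (hη_zero : ∀ x : Euc N, r₀ ≤ ‖x‖ → η x = 0)
    (hM_ne : {z : Euc N | b z = 1}.Nonempty)
    (hM_cpt : IsCompact {z : Euc N | b z = 1})
    (hb_le : ∀ x, b x ≤ 1)
    (ρ C₀ : ℝ) (hρ : (N : ℝ) < ρ) (hC₀ : 0 < C₀)
    (hH2 : ∀ z : Euc N, b z = 1 → ∀ x : Euc N, ‖x - z‖ < r₀ → 1 - b x ≤ C₀ * ‖x - z‖ ^ ρ) :
    ∃ C > (0 : ℝ), ∀ ε : ℝ, 0 < ε → ε ≤ 1 → ∀ z : Euc N, b z = 1 →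
      0 ≤ (∫ x : Euc N, bubble N α ε x ^ twoStar N α)
          - (∫ x : Euc N, b x * η (x - z) ^ twoStar N α * bubble N α ε (x - z) ^ twoStar N α) ∧
      (∫ x : Euc N, bubble N α ε x ^ twoStar N α)
          - (∫ x : Euc N, b x * η (x - z) ^ twoStar N α * bubble N α ε (x - z) ^ twoStar N α)
        ≤ C * ε ^ (N : ℝ) := by
  obtain ⟨Cb, hCb⟩ := hb_bdd
  have hCb0 : 0 ≤ Cb := (abs_nonneg _).trans (hCb hM_ne.choose)
  have hNR : (0:ℝ) < N := lt_trans (by positivity) hN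
  have hN0 : 0 < N := by exact_mod_cast hNR
  have hNα : 0 < (N : ℝ) - 2 * α := by linarith
  have hq : 0 < twoStar N α := div_pos (by positivity) hNα
  have hηq01 : ∀ y : Euc N, 0 ≤ η y ^ twoStar N α ∧ η y ^ twoStar N α ≤ 1 := fun y =>
    ⟨Real.rpow_nonneg (hη01 y).1 _, Real.rpow_le_one (hη01 y).1 (hη01 y).2 hq.le⟩
  have h2N : (Module.finrank ℝ (Euc N) : ℝ) < 2 * (N : ℝ) := by
    rw [finrank_euclideanSpace_fin]; linarith
  set R : ℝ := r₀ / 2 with hRdef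
  have hR : 0 < R := by positivity
  set c : ℝ := R / (1 + R) with hcdef
  have hc : 0 < c := by positivity
  have hc2N : 0 < c ^ (2 * (N : ℝ)) := Real.rpow_pos_of_pos hc _
  set K2 : ℝ := (1 + Cb) / c ^ (2 * (N : ℝ)) with hK2def
  have hK2 : 0 ≤ K2 := by positivity
  set I₁ : ℝ := ∫ y in Metric.ball (0 : Euc N) R, ‖y‖ ^ (ρ - 2 * (N : ℝ)) with hI₁def
  set I₂ : ℝ := ∫ y : Euc N, (1 + ‖y‖) ^ (-(2 * (N : ℝ))) with hI₂def
  have hI₁0 : 0 ≤ I₁ := integral_nonneg fun y => Real.rpow_nonneg (norm_nonneg _) _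
  have hI₂0 : 0 ≤ I₂ := integral_nonneg fun y => Real.rpow_nonneg (by positivity) _
  have hbase : Integrable (fun y : Euc N => (1 + ‖y‖) ^ (-(2 * (N : ℝ)))) :=
    integrable_one_add_norm h2N
  have hIball_int : IntegrableOn (fun y : Euc N => ‖y‖ ^ (ρ - 2 * (N : ℝ)))
      (Metric.ball (0 : Euc N) R) :=
    integrableOn_rpow_norm_ball' N hN0 (by linarith) hR
  refine ⟨C₀ * I₁ + K2 * I₂ + 1, by nlinarith, ?_⟩
  intro ε hε hε1 z hz
  set q : ℝ := twoStar N α with hqdef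
  set f : Euc N → ℝ := fun y => ε ^ (N : ℝ) / (ε ^ 2 + ‖y‖ ^ 2) ^ (N : ℝ) with hfdef
  have hf_nonneg : ∀ y, 0 ≤ f y := fun y => by positivity
  have hf_cont : Continuous f := by
    apply continuous_const.div
    · exact (continuous_const.add (continuous_norm.pow 2)).rpow_const
        fun y => Or.inr (Nat.cast_nonneg _)
    · intro y
      positivity
  have hεN : 0 < ε ^ (N : ℝ) := Real.rpow_pos_of_pos hε _
  have hf_le : ∀ y : Euc N, f y ≤ ε ^ (N:ℝ) / (ε^2/2) ^ (N:ℝ) * (1 + ‖y‖) ^ (-(2 * (N:ℝ))) := by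
    intro y
    have h1y : (0:ℝ) < 1 + ‖y‖ := by positivity
    have hB : (0:ℝ) < ε^2/2 * (1+‖y‖)^2 := by positivity
    have hε2 : ε^2 ≤ 1 := by nlinarith
    have hBA : ε^2/2 * (1+‖y‖)^2 ≤ ε^2 + ‖y‖^2 := by nlinarith [sq_nonneg (1 - ‖y‖), norm_nonneg y, sq_nonneg ε, sq_nonneg ‖y‖]
    have e : (ε^2/2 * (1+‖y‖)^2) ^ (N:ℝ) = (ε^2/2) ^ (N:ℝ) * (1+‖y‖) ^ (2*(N:ℝ)) := by
      rw [Real.mul_rpow (by positivity) (by positivity), ← Real.rpow_natCast (1+‖y‖) 2,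
        ← Real.rpow_mul h1y.le]
      norm_num
    calc f y ≤ ε ^ (N:ℝ) / (ε^2/2 * (1+‖y‖)^2) ^ (N:ℝ) := by
          apply div_le_div_of_nonneg_left hεN.le (Real.rpow_pos_of_pos hB _)
          exact Real.rpow_le_rpow hB.le hBA (by positivity)
      _ = ε ^ (N:ℝ) / (ε^2/2) ^ (N:ℝ) * (1 + ‖y‖) ^ (-(2 * (N:ℝ))) := by
          rw [e, Real.rpow_neg h1y.le]; ring
  have hf_int : Integrable f := by
    apply Integrable.mono' (hbase.const_mul (ε ^ (N:ℝ) / (ε^2/2) ^ (N:ℝ)))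
      hf_cont.aestronglyMeasurable
    filter_upwards with y
    rw [Real.norm_eq_abs, abs_of_nonneg (hf_nonneg y)]
    exact hf_le y
  set H : Euc N → ℝ := fun y => b (y + z) * η y ^ q * f y with hHdef
  have hH_cont : Continuous H :=
    ((hb_cont.comp (continuous_id.add continuous_const)).mul
      (continuous_iff_continuousAt.mpr fun y =>
        (Real.continuousAt_rpow_const _ _ (Or.inr hq.le)).comp hη_cont.continuousAt)).mul hf_cont
  have hH_le : ∀ y, H y ≤ f y := by
    intro y
    have h1 : b (y + z) * η y ^ q ≤ 1 :=
      le_trans (mul_le_of_le_one_left (hηq01 y).1 (hb_le _)) (hηq01 y).2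
    calc H y = b (y + z) * η y ^ q * f y := rfl
      _ ≤ 1 * f y := mul_le_mul_of_nonneg_right h1 (hf_nonneg y)
      _ = f y := one_mul _
  have hH_abs : ∀ y, |H y| ≤ Cb * f y := by
    intro y
    rw [hHdef]
    simp only [abs_mul]
    rw [abs_of_nonneg (hf_nonneg y)]
    have h2 : |η y ^ q| ≤ 1 := by
      rw [abs_of_nonneg (hηq01 y).1]; exact (hηq01 y).2
    calc |b (y+z)| * |η y ^ q| * f y ≤ Cb * 1 * f y := by
          apply mul_le_mul_of_nonneg_right _ (hf_nonneg y)
          exact mul_le_mul (hCb _) h2 (abs_nonneg _) hCb0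
      _ = Cb * f y := by ring
  have hH_int : Integrable H :=
    Integrable.mono' (hf_int.const_mul Cb) hH_cont.aestronglyMeasurable
      (by filter_upwards with y; rw [Real.norm_eq_abs]; exact hH_abs y)
  have e1 : (∫ x : Euc N, bubble N α ε x ^ q) = ∫ y, f y := by
    apply integral_congr_ae
    filter_upwards with x
    exact bubble_rpow N α ε hε hNα x
  have e2 : (∫ x : Euc N, b x * η (x - z) ^ q * bubble N α ε (x - z) ^ q) = ∫ y, H y := by
    have : (fun x : Euc N => b x * η (x - z) ^ q * bubble N α ε (x - z) ^ q)
        = fun x => H (x - z) := by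
      funext x
      rw [hHdef]
      simp only
      rw [sub_add_cancel, bubble_rpow N α ε hε hNα]
    rw [this, integral_sub_right_eq_self H z]
  set g : Euc N → ℝ := fun y => f y - H y with hgdef
  have hg_int : Integrable g := hf_int.sub hH_int
  have hg_nonneg : ∀ y, 0 ≤ g y := fun y => sub_nonneg.mpr (hH_le y)
  have eD : (∫ x : Euc N, bubble N α ε x ^ q)
      - (∫ x : Euc N, b x * η (x - z) ^ q * bubble N α ε (x - z) ^ q) = ∫ y, g y := by
    rw [e1, e2, ← integral_sub hf_int hH_int]
  rw [hqdef] at eD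
  rw [eD]
  constructor
  · exact integral_nonneg hg_nonneg
  · have hsplit : (∫ y, g y) = (∫ y in Metric.ball (0 : Euc N) R, g y)
        + ∫ y in (Metric.ball (0 : Euc N) R)ᶜ, g y :=
      (integral_add_compl measurableSet_ball hg_int).symm
    have hball : ∀ y ∈ Metric.ball (0 : Euc N) R, g y ≤ C₀ * ε ^ (N:ℝ) * ‖y‖ ^ (ρ - 2*(N:ℝ)) := by
      intro y hy
      have hyR : ‖y‖ < R := mem_ball_zero_iff.mp hy
      have hηy : η y = 1 := hη_one y (by rw [hRdef] at hyR; linarith)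
      have hgy : g y = (1 - b (y + z)) * f y := by
        rw [hgdef]; simp only [hHdef, hηy, Real.one_rpow]; ring
      have hyz : ‖(y + z) - z‖ < r₀ := by rw [add_sub_cancel_right]; rw [hRdef] at hyR; linarith
      have hb2 := hH2 z hz (y + z) hyz
      rw [add_sub_cancel_right] at hb2
      rw [hgy]
      calc (1 - b (y + z)) * f y ≤ C₀ * ‖y‖ ^ ρ * f y :=
            mul_le_mul_of_nonneg_right hb2 (hf_nonneg y)
        _ ≤ C₀ * ε ^ (N:ℝ) * ‖y‖ ^ (ρ - 2*(N:ℝ)) := by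
            rcases eq_or_ne y 0 with h0 | h0
            · simp only [h0, norm_zero]
              rw [Real.zero_rpow (by linarith : ρ ≠ 0)]
              have : (0:ℝ) ≤ C₀ * ε ^ (N:ℝ) * (0:ℝ) ^ (ρ - 2*(N:ℝ)) := by positivity
              simpa using this
            · have hy0 : 0 < ‖y‖ := norm_pos_iff.mpr h0
              have key : ‖y‖ ^ (2*(N:ℝ)) ≤ (ε^2 + ‖y‖^2) ^ (N:ℝ) := by
                have e3 : ‖y‖ ^ (2*(N:ℝ)) = (‖y‖^2) ^ (N:ℝ) := by
                  rw [← Real.rpow_natCast ‖y‖ 2, ← Real.rpow_mul (norm_nonneg y)]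
                  norm_num
                rw [e3]
                exact Real.rpow_le_rpow (by positivity) (by nlinarith [sq_nonneg ε]) (by positivity)
              rw [Real.rpow_sub hy0]
              calc C₀ * ‖y‖ ^ ρ * f y = C₀ * (‖y‖ ^ ρ * ε ^ (N:ℝ)) / (ε^2 + ‖y‖^2) ^ (N:ℝ) := by
                    rw [hfdef]; ring
                _ ≤ C₀ * (‖y‖ ^ ρ * ε ^ (N:ℝ)) / ‖y‖ ^ (2*(N:ℝ)) := by
                    apply div_le_div_of_nonneg_left (by positivity)
                      (Real.rpow_pos_of_pos hy0 _) key
                _ = C₀ * ε ^ (N:ℝ) * (‖y‖ ^ ρ / ‖y‖ ^ (2*(N:ℝ))) := by ring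
    have hcpl : ∀ y ∈ (Metric.ball (0 : Euc N) R)ᶜ,
        g y ≤ K2 * ε ^ (N:ℝ) * (1 + ‖y‖) ^ (-(2 * (N:ℝ))) := by
      intro y hy
      have hyR : R ≤ ‖y‖ := by
        have := hy
        simp only [Set.mem_compl_iff, Metric.mem_ball, dist_zero_right, not_lt] at this
        exact this
      have h1y : (0:ℝ) < 1 + ‖y‖ := by positivity
      have hgle : g y ≤ (1 + Cb) * f y := by
        have : -H y ≤ Cb * f y := (neg_le_abs _).trans (hH_abs y)
        rw [hgdef]
        simp only
        linarith
      have hc_le : c * (1 + ‖y‖) ≤ ‖y‖ := by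
        rw [hcdef, div_mul_eq_mul_div, div_le_iff₀ (by positivity)]
        nlinarith
      have hA_ge : (c * (1 + ‖y‖))^2 ≤ ε^2 + ‖y‖^2 := by
        nlinarith [sq_nonneg ε, mul_pos hc h1y]
      have e4 : ((c * (1 + ‖y‖))^2) ^ (N:ℝ) = c ^ (2*(N:ℝ)) * (1 + ‖y‖) ^ (2*(N:ℝ)) := by
        rw [mul_pow, Real.mul_rpow (by positivity) (by positivity),
          ← Real.rpow_natCast c 2, ← Real.rpow_natCast (1+‖y‖) 2,
          ← Real.rpow_mul hc.le, ← Real.rpow_mul h1y.le]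
        norm_num
      have hfy : f y ≤ ε ^ (N:ℝ) / (c ^ (2*(N:ℝ)) * (1 + ‖y‖) ^ (2*(N:ℝ))) := by
        rw [← e4, hfdef]
        simp only
        apply div_le_div_of_nonneg_left hεN.le (Real.rpow_pos_of_pos (by positivity) _)
        exact Real.rpow_le_rpow (by positivity) hA_ge (by positivity)
      calc g y ≤ (1 + Cb) * f y := hgle
        _ ≤ (1 + Cb) * (ε ^ (N:ℝ) / (c ^ (2*(N:ℝ)) * (1 + ‖y‖) ^ (2*(N:ℝ)))) :=
            mul_le_mul_of_nonneg_left hfy (by positivity)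
        _ = K2 * ε ^ (N:ℝ) * (1 + ‖y‖) ^ (-(2 * (N:ℝ))) := by
            rw [hK2def, Real.rpow_neg h1y.le]
            ring
    have hIball : (∫ y in Metric.ball (0 : Euc N) R, g y) ≤ C₀ * ε ^ (N:ℝ) * I₁ := by
      calc (∫ y in Metric.ball (0 : Euc N) R, g y)
          ≤ ∫ y in Metric.ball (0 : Euc N) R, C₀ * ε ^ (N:ℝ) * ‖y‖ ^ (ρ - 2*(N:ℝ)) :=
            setIntegral_mono_on hg_int.integrableOn (hIball_int.const_mul _)
              measurableSet_ball hball
        _ = C₀ * ε ^ (N:ℝ) * I₁ := by rw [hI₁def, integral_const_mul]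
    have hIcpl : (∫ y in (Metric.ball (0 : Euc N) R)ᶜ, g y) ≤ K2 * ε ^ (N:ℝ) * I₂ := by
      calc (∫ y in (Metric.ball (0 : Euc N) R)ᶜ, g y)
          ≤ ∫ y in (Metric.ball (0 : Euc N) R)ᶜ, K2 * ε ^ (N:ℝ) * (1 + ‖y‖) ^ (-(2*(N:ℝ))) :=
            setIntegral_mono_on hg_int.integrableOn ((hbase.const_mul _).integrableOn)
              measurableSet_ball.compl hcpl
        _ ≤ ∫ y : Euc N, K2 * ε ^ (N:ℝ) * (1 + ‖y‖) ^ (-(2*(N:ℝ))) :=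
            setIntegral_le_integral (hbase.const_mul _)
              (by filter_upwards with y; positivity)
        _ = K2 * ε ^ (N:ℝ) * I₂ := by rw [hI₂def, integral_const_mul]
    calc (∫ y, g y) = (∫ y in Metric.ball (0 : Euc N) R, g y)
          + ∫ y in (Metric.ball (0 : Euc N) R)ᶜ, g y := hsplit
      _ ≤ C₀ * ε ^ (N:ℝ) * I₁ + K2 * ε ^ (N:ℝ) * I₂ := add_le_add hIball hIcpl
      _ = (C₀ * I₁ + K2 * I₂) * ε ^ (N:ℝ) := by ring
      _ ≤ (C₀ * I₁ + K2 * I₂ + 1) * ε ^ (N:ℝ) := by nlinarith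

end
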